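/- Let B1 and B2 be two disjoint bases of a matroid M, let C be a directed cycle in the exchange graph D(B1,B2), and let t ∈ V(C). Then there exists an exchangeable set U ⊆ V(C) for B1 and B2 with t ∈ U. Moreover, if no cycle C' satisfies t ∈ V(C') ⊊ V(C), then V(C) itself is exchangeable. -/

import Mathlib

open Set

variable {α : Type*}

/-- Edge relation of the exchange graph `D(B1,B2)`: there is an edge `(x,y)` from
`x ∈ B_i` to `y ∈ B_j` (`i ≠ j`) whenever `B_i - x + y` is a basis. -/
def ExchEdge (M : Matroid α) (B1 B2 : Set α) (x y : α) : Prop :=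
  (x ∈ B1 ∧ y ∈ B2 ∧ M.IsBase (insert y (B1 \ {x}))) ∨
  (x ∈ B2 ∧ y ∈ B1 ∧ M.IsBase (insert y (B2 \ {x})))

/-- A directed cycle with respect to an edge relation `R`, given as a nonempty
list of pairwise distinct vertices, cyclically consecutive vertices joined by edges. -/
def IsCycle (R : α → α → Prop) (l : List α) : Prop :=
  l ≠ [] ∧ l.Nodup ∧ l.Chain' R ∧ ∀ h : l ≠ [], R (l.getLast h) (l.head h)

/-- `X` is an exchangeable set for the disjoint bases `B1` and `B2`. -/
def ExchangeableSet (M : Matroid α) (B1 B2 : Set α) (X : Set α) : Prop :=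
  X ⊆ B1 ∪ B2 ∧ M.IsBase (symmDiff B1 X) ∧ M.IsBase (symmDiff B2 X)




lemma base_insert_diff_iff {M : Matroid α} {B : Set α} (hB : M.IsBase B) {a b : α}
    (hbE : b ∈ M.E) (hb : b ∉ B) :
    M.IsBase (insert b (B \ {a})) ↔ b ∉ M.closure (B \ {a}) := by
  have hI : M.Indep (B \ {a}) := hB.indep.subset diff_subset
  have hb' : b ∉ B \ {a} := fun h => hb h.1
  constructor
  · intro h
    have h2 := h.indep
    rw [hI.insert_indep_iff_of_notMem hb'] at h2
    exact h2.2
  · intro h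
    exact hB.exchange_isBase_of_indep hb ((hI.insert_indep_iff_of_notMem hb').2 ⟨hbE, h⟩)

lemma triangular_exchange (M : Matroid α) :
    ∀ (p : List (α × α)) (B : Set α), M.IsBase B →
    (p.map Prod.fst).Nodup → (p.map Prod.snd).Nodup →
    (∀ q ∈ p, q.1 ∈ B) → (∀ q ∈ p, q.2 ∈ M.E \ B) →
    (∀ q ∈ p, M.IsBase (insert q.2 (B \ {q.1}))) →
    p.Pairwise (fun q r => ¬ M.IsBase (insert r.2 (B \ {q.1}))) →
    M.IsBase ((B \ {x | x ∈ p.map Prod.fst}) ∪ {x | x ∈ p.map Prod.snd}) := by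
  intro p
  induction p with
  | nil => intro B hB _ _ _ _ _ _; simpa using hB
  | cons hd tl ih =>
    intro B hB hf hs hmem1 hmem2 hdiag hpw
    obtain ⟨x, y⟩ := hd
    simp only [List.map_cons, List.nodup_cons] at hf hs
    have hxB : x ∈ B := hmem1 (x, y) (by simp)
    have hyB : y ∈ M.E \ B := hmem2 (x, y) (by simp)
    have hpwh := List.pairwise_cons.1 hpw
    set B' : Set α := insert y (B \ {x}) with hB'def
    have hB' : M.IsBase B' := hdiag (x, y) (by simp)
    have hq1x : ∀ q ∈ tl, q.1 ≠ x := by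
      intro q hq h; exact hf.1 (h ▸ List.mem_map_of_mem (f := Prod.fst) hq)
    have hq2y : ∀ q ∈ tl, q.2 ≠ y := by
      intro q hq h; exact hs.1 (h ▸ List.mem_map_of_mem (f := Prod.snd) hq)
    have hq1B' : ∀ q ∈ tl, q.1 ∈ B' := fun q hq =>
      Or.inr ⟨hmem1 q (List.mem_cons_of_mem _ hq), hq1x q hq⟩
    have hq2B' : ∀ q ∈ tl, q.2 ∈ M.E \ B' := by
      intro q hq
      refine ⟨(hmem2 q (List.mem_cons_of_mem _ hq)).1, ?_⟩
      rintro (h | h)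
      · exact hq2y q hq h
      · exact (hmem2 q (List.mem_cons_of_mem _ hq)).2 h.1
    have hclx : ∀ q ∈ tl, q.2 ∈ M.closure (B \ {x}) := by
      intro q hq
      have h1 := hpwh.1 q hq
      have h2 := hmem2 q (List.mem_cons_of_mem _ hq)
      by_contra h
      exact h1 ((base_insert_diff_iff hB h2.1 h2.2).2 h)
    have hsplit : ∀ q ∈ tl, B \ {q.1} = insert x ((B \ {x}) \ {q.1}) := by
      intro q hq
      have hxq : x ≠ q.1 := fun h => hq1x q hq h.symm
      ext z
      simp only [mem_diff, mem_singleton_iff, mem_insert_iff]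
      constructor
      · rintro ⟨hz, hz2⟩
        by_cases hzx : z = x
        · exact Or.inl hzx
        · exact Or.inr ⟨⟨hz, hzx⟩, hz2⟩
      · rintro (rfl | ⟨⟨hz, _⟩, hz2⟩)
        · exact ⟨hxB, hxq⟩
        · exact ⟨hz, hz2⟩
    -- key claim: q.2 ∈ cl(B\{q.1}) → q.2 ∈ cl((B\{x})\{q.1})
    have hinter : ∀ q ∈ tl, q.2 ∈ M.closure (B \ {q.1}) →
        q.2 ∈ M.closure ((B \ {x}) \ {q.1}) := by
      intro q hq h1
      by_contra h2
      rw [hsplit q hq] at h1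
      have hex := Matroid.closure_exchange ⟨h1, h2⟩
      have hsub : insert q.2 ((B \ {x}) \ {q.1}) ⊆ M.closure (B \ {x}) :=
        insert_subset (hclx q hq)
          (diff_subset.trans (M.subset_closure _ (diff_subset.trans hB.subset_ground)))
      have := M.closure_subset_closure_of_subset_closure hsub hex.1
      exact hB.indep.notMem_closure_diff_of_mem hxB this
    have hB'q : ∀ q ∈ tl, B' \ {q.1} = insert y ((B \ {x}) \ {q.1}) := by
      intro q hq
      rw [hB'def, insert_diff_of_notMem]
      simp only [mem_singleton_iff]
      intro h
      exact hyB.2 (h ▸ hmem1 q (List.mem_cons_of_mem _ hq))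
    -- diag for B'
    have hdiag' : ∀ q ∈ tl, M.IsBase (insert q.2 (B' \ {q.1})) := by
      intro q hq
      rw [base_insert_diff_iff hB' (hq2B' q hq).1 (hq2B' q hq).2, hB'q q hq]
      intro hcon
      -- q.2 ∉ cl(B\{q.1}) from diag
      have hd := hdiag q (List.mem_cons_of_mem _ hq)
      rw [base_insert_diff_iff hB (hmem2 q (List.mem_cons_of_mem _ hq)).1
        (hmem2 q (List.mem_cons_of_mem _ hq)).2] at hd
      -- q.2 ∉ cl((B\{x})\{q.1})
      have hd2 : q.2 ∉ M.closure ((B \ {x}) \ {q.1}) := fun h =>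
        hd (M.closure_subset_closure (diff_subset_diff_left diff_subset) h)
      have hex := Matroid.closure_exchange ⟨hcon, hd2⟩
      -- y ∈ cl(insert q.2 ((B\{x})\{q.1}))
      -- also q.1 ∈ cl(insert q.2 ((B\{x})\{q.1})) : from q.2 ∈ cl(B\{x}) = cl(insert q.1 S)
      have hq1Bx : q.1 ∈ B \ {x} := ⟨hmem1 q (List.mem_cons_of_mem _ hq), hq1x q hq⟩
      have hS : B \ {x} = insert q.1 ((B \ {x}) \ {q.1}) := by
        rw [insert_diff_singleton, insert_eq_of_mem hq1Bx]
      have hclS : q.2 ∉ M.closure ((B \ {x}) \ {q.1}) := hd2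
      have h1 : q.2 ∈ M.closure (insert q.1 ((B \ {x}) \ {q.1})) := hS ▸ hclx q hq
      have hex2 := Matroid.closure_exchange ⟨h1, hclS⟩
      -- now q.1 ∈ cl(insert q.2 S) and y ∈ cl(insert q.2 S); but then B' dependent:
      -- B' \ {q.1} = insert y S, and q.1 ∈ cl(insert q.2 S) ⊆ cl(insert y S) since q.2 ∈ cl(insert y S)
      have hsub : insert q.2 ((B \ {x}) \ {q.1}) ⊆ M.closure (insert y ((B \ {x}) \ {q.1})) := by
        refine insert_subset hcon ?_
        refine (subset_insert _ _).trans (M.subset_closure _ ?_)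
        exact insert_subset hyB.1 ((diff_subset.trans diff_subset).trans hB.subset_ground)
      have hfin := M.closure_subset_closure_of_subset_closure hsub hex2.1
      rw [← hB'q q hq] at hfin
      exact hB'.indep.notMem_closure_diff_of_mem (hq1B' q hq) hfin
    -- pairwise for B'
    have hpw' : tl.Pairwise (fun q r => ¬ M.IsBase (insert r.2 (B' \ {q.1}))) := by
      refine hpwh.2.imp_of_mem ?_
      intro q r hq hr hnb hb
      -- r.2 ∈ cl(B\{q.1}) from hnb; want contradiction with hb : Base (insert r.2 (B'\{q.1}))
      have hr2 := hmem2 r (List.mem_cons_of_mem _ hr)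
      have h1 : r.2 ∈ M.closure (B \ {q.1}) := by
        by_contra h
        exact hnb ((base_insert_diff_iff hB hr2.1 hr2.2).2 h)
      have h2 : r.2 ∈ M.closure ((B \ {x}) \ {q.1}) := by
        -- same "intersection" argument but for r.2 with q.1 : copy of hinter but mixed q r
        by_contra h2
        rw [hsplit q hq] at h1
        have hex := Matroid.closure_exchange ⟨h1, h2⟩
        have hsub : insert r.2 ((B \ {x}) \ {q.1}) ⊆ M.closure (B \ {x}) :=
          insert_subset (hclx r hr)
            (diff_subset.trans (M.subset_closure _ (diff_subset.trans hB.subset_ground)))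
        have := M.closure_subset_closure_of_subset_closure hsub hex.1
        exact hB.indep.notMem_closure_diff_of_mem hxB this
      rw [base_insert_diff_iff hB' (hq2B' r hr).1 (hq2B' r hr).2, hB'q q hq] at hb
      exact hb (M.closure_subset_closure (subset_insert _ _) h2)
    have hres := ih B' hB' hf.2 hs.2 hq1B' hq2B' hdiag' hpw'
    -- now rewrite the set
    have hyF : y ∉ {z | z ∈ tl.map Prod.fst} := by
      intro h
      simp only [mem_setOf_eq, List.mem_map] at h
      obtain ⟨q, hq, hqy⟩ := h
      exact hyB.2 (hqy ▸ hmem1 q (List.mem_cons_of_mem _ hq))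
    have heq : (B' \ {z | z ∈ tl.map Prod.fst}) ∪ {z | z ∈ tl.map Prod.snd}
        = (B \ {z | z ∈ (((x,y)) :: tl).map Prod.fst}) ∪ {z | z ∈ ((x,y) :: tl).map Prod.snd} := by
      ext z
      simp only [hB'def, List.map_cons, mem_union, mem_diff, mem_insert_iff, mem_setOf_eq,
        List.mem_cons, mem_singleton_iff]
      constructor
      · rintro (⟨(rfl | ⟨hzB, hzx⟩), hzF⟩ | hzS)
        · exact Or.inr (Or.inl rfl)
        · exact Or.inl ⟨hzB, by tauto⟩
        · exact Or.inr (Or.inr hzS)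
      · rintro (⟨hzB, hzF⟩ | (rfl | hzS))
        · exact Or.inl ⟨Or.inr ⟨hzB, by tauto⟩, by tauto⟩
        · exact Or.inl ⟨Or.inl rfl, hyF⟩
        · exact Or.inr hzS
    rwa [heq] at hres



lemma chain'_infix_pair {R : α → α → Prop} :
    ∀ (X : List α) {a b : α} {Y : List α}, (X ++ a :: b :: Y).Chain' R → R a b
  | [], a, b, Y, h => (List.isChain_cons_cons.1 (by simpa [List.Chain'] using h)).1
  | x :: X, a, b, Y, h => chain'_infix_pair X (h.tail)

lemma isCycle_rotate {R : α → α → Prop} {a b : List α}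
    (h : IsCycle R (a ++ b)) : IsCycle R (b ++ a) := by
  obtain ⟨hne, hnd, hch, hcl⟩ := h
  rcases eq_or_ne a [] with rfl | ha
  · simpa using ⟨hne, hnd, hch, hcl⟩
  rcases eq_or_ne b [] with rfl | hb
  · simpa using ⟨by simpa using hne, by simpa using hnd, by simpa using hch, by simpa using hcl⟩
  rw [List.Chain', List.isChain_append] at hch
  obtain ⟨hca, hcb, hlink⟩ := hch
  have hab : a ++ b ≠ [] := fun h => ha (by simpa using List.append_eq_nil_iff.1 h |>.1)
  refine ⟨by simp [hb], by rw [List.nodup_append] at hnd ⊢; exact ⟨hnd.2.1, hnd.1, fun x hx y hy h => hnd.2.2 y hy x hx h.symm⟩, ?_, ?_⟩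
  · rw [List.Chain', List.isChain_append]
    refine ⟨hcb, hca, ?_⟩
    intro x hx y hy
    have hx' : x = (a ++ b).getLast hab := by
      rw [List.getLast_append_of_ne_nil _ hb]
      rw [List.getLast?_eq_getLast hb] at hx
      simpa using hx.symm
    have hy' : y = (a ++ b).head hab := by
      rw [List.head_append_of_ne_nil ha]
      rw [List.head?_eq_head ha] at hy
      simpa using hy.symm
    rw [hx', hy']; exact hcl hab
  · intro h
    have h1 : (b ++ a).getLast h = a.getLast ha := List.getLast_append_of_ne_nil _ ha
    have h2 : (b ++ a).head h = b.head hb := List.head_append_of_ne_nil hb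
    rw [h1, h2]
    exact hlink _ (by simp [List.getLast?_eq_getLast ha]) _ (by simp [List.head?_eq_head hb])

lemma shortcut1 {R : α → α → Prop} {A Mid Z : List α} (hA : A ≠ []) (hM : Mid ≠ []) (hZ : Z ≠ [])
    (hcyc : IsCycle R (A ++ (Mid ++ Z))) (hlink : R (A.getLast hA) (Z.head hZ)) :
    IsCycle R (A ++ Z) ∧ {x | x ∈ A ++ Z} ⊂ {x | x ∈ A ++ (Mid ++ Z)} := by
  obtain ⟨hne, hnd, hch, hcl⟩ := hcyc
  rw [List.Chain', List.isChain_append] at hch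
  obtain ⟨hcA, hch2, _⟩ := hch
  rw [List.isChain_append] at hch2
  obtain ⟨hcM, hcZ, _⟩ := hch2
  have hndAZ : (A ++ Z).Nodup := by
    rw [List.nodup_append] at hnd ⊢
    obtain ⟨h1, h2, h3⟩ := hnd
    rw [List.nodup_append] at h2
    exact ⟨h1, h2.2.1, fun x hx y hy => h3 x hx y (List.mem_append_right _ hy)⟩
  have hne' : A ++ Z ≠ [] := fun h => hA (List.append_eq_nil_iff.1 h).1
  refine ⟨⟨hne', hndAZ, ?_, ?_⟩, ?_⟩
  · rw [List.Chain', List.isChain_append]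
    refine ⟨hcA, hcZ, ?_⟩
    intro x hx y hy
    rw [List.getLast?_eq_getLast hA] at hx
    rw [List.head?_eq_head hZ] at hy
    simp only [Option.mem_some_iff] at hx hy
    rw [← hx, ← hy]; exact hlink
  · intro h
    have hne2 : A ++ (Mid ++ Z) ≠ [] := fun h => hA (List.append_eq_nil_iff.1 h).1
    have h1 : (A ++ Z).getLast h = (A ++ (Mid ++ Z)).getLast hne2 := by
      rw [List.getLast_append_of_ne_nil _ hZ, List.getLast_append_of_ne_nil _ (by simp [hZ]),
        List.getLast_append_of_ne_nil _ hZ]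
    have h2 : (A ++ Z).head h = (A ++ (Mid ++ Z)).head hne2 := by
      rw [List.head_append_of_ne_nil hA, List.head_append_of_ne_nil hA]
    rw [h1, h2]; exact hcl hne2
  · constructor
    · intro x hx
      simp only [mem_setOf_eq, List.mem_append] at hx ⊢
      tauto
    · intro hsub
      have hmid : Mid.head hM ∈ {x | x ∈ A ++ (Mid ++ Z)} := by
        simp only [mem_setOf_eq, List.mem_append]
        exact Or.inr (Or.inl (List.head_mem hM))
      have := hsub hmid
      simp only [mem_setOf_eq, List.mem_append] at this
      rw [List.nodup_append] at hnd
      obtain ⟨_, hnd2, hdisj⟩ := hnd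
      rw [List.nodup_append] at hnd2
      rcases this with h | h
      · exact hdisj _ h _ (List.mem_append_left _ (List.head_mem hM)) rfl
      · exact hnd2.2.2 _ (List.head_mem hM) _ h rfl

lemma shortcut2 {R : α → α → Prop} {Mid Z : List α} (hM : Mid ≠ []) (hZ : Z ≠ [])
    (hcyc : IsCycle R (Mid ++ Z)) (hlink : R (Z.getLast hZ) (Z.head hZ)) :
    IsCycle R Z ∧ {x | x ∈ Z} ⊂ {x | x ∈ Mid ++ Z} := by
  obtain ⟨hne, hnd, hch, hcl⟩ := hcyc
  rw [List.Chain', List.isChain_append] at hch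
  rw [List.nodup_append] at hnd
  refine ⟨⟨hZ, hnd.2.1, hch.2.1, fun h => hlink⟩, ?_⟩
  constructor
  · intro x hx; simp only [mem_setOf_eq, List.mem_append] at hx ⊢; tauto
  · intro hsub
    have := hsub (show Mid.head hM ∈ {x | x ∈ Mid ++ Z} by
      simp only [mem_setOf_eq, List.mem_append]; exact Or.inl (List.head_mem hM))
    exact hnd.2.2 _ (List.head_mem hM) _ this rfl

def pf : α × α → List α := fun q => [q.1, q.2]

lemma flatMap_pf_cons (q : α × α) (p : List (α × α)) :
    (q :: p).flatMap pf = q.1 :: q.2 :: p.flatMap pf := by simp [pf]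

lemma flatMap_pf_ne_nil {p : List (α × α)} (hp : p ≠ []) : p.flatMap pf ≠ [] := by
  cases p with
  | nil => exact absurd rfl hp
  | cons q p => simp [pf]

lemma head_flatMap_pf {p : List (α × α)} (hp : p ≠ []) (h : p.flatMap pf ≠ []) :
    (p.flatMap pf).head h = (p.head hp).1 := by
  cases p with
  | nil => exact absurd rfl hp
  | cons q p => simp [pf]

lemma getLast?_flatMap_pf : ∀ (p : List (α × α)),
    (p.flatMap pf).getLast? = p.getLast?.map Prod.snd
  | [] => rfl
  | [q] => by simp [pf]
  | q :: q' :: p => by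
    rw [flatMap_pf_cons, show q.1 :: q.2 :: (q' :: p).flatMap pf
        = [q.1, q.2] ++ (q' :: p).flatMap pf from rfl,
      List.getLast?_append, getLast?_flatMap_pf (q' :: p), List.getLast?_cons_cons,
      List.getLast?_eq_getLast (by simp)]
    rfl

lemma getLast_flatMap_pf {p : List (α × α)} (hp : p ≠ []) (h : p.flatMap pf ≠ []) :
    (p.flatMap pf).getLast h = (p.getLast hp).2 := by
  have := getLast?_flatMap_pf p
  rw [List.getLast?_eq_getLast h, List.getLast?_eq_getLast hp] at this
  simpa using this

lemma mapfst_sublist_flatMap_pf : ∀ (p : List (α × α)),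
    List.Sublist (p.map Prod.fst) (p.flatMap pf)
  | [] => List.Sublist.refl _
  | q :: p => by
    rw [flatMap_pf_cons, List.map_cons]
    exact List.Sublist.cons₂ q.1 (List.Sublist.cons q.2 (mapfst_sublist_flatMap_pf p))

lemma mapsnd_sublist_flatMap_pf : ∀ (p : List (α × α)),
    List.Sublist (p.map Prod.snd) (p.flatMap pf)
  | [] => List.Sublist.refl _
  | q :: p => by
    rw [flatMap_pf_cons, List.map_cons]
    exact List.Sublist.cons q.1 (List.Sublist.cons₂ q.2 (mapsnd_sublist_flatMap_pf p))

lemma mem_flatMap_pf {p : List (α × α)} {x : α} :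
    x ∈ p.flatMap pf ↔ ∃ q ∈ p, x = q.1 ∨ x = q.2 := by
  simp only [List.mem_flatMap, pf, List.mem_cons, List.mem_singleton, List.not_mem_nil, or_false]

lemma split1_pf (p : List (α × α)) {i : ℕ} (hi : i < p.length) :
    p.flatMap pf =
      (p.take i).flatMap pf ++ p[i].1 :: p[i].2 :: (p.drop (i + 1)).flatMap pf := by
  conv_lhs => rw [← List.take_append_drop i p, List.flatMap_append,
    List.drop_eq_getElem_cons hi]
  rw [flatMap_pf_cons]

lemma split2_pf (p : List (α × α)) {i j : ℕ} (hij : i < j) (hj : j < p.length) :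
    p.flatMap pf =
      (p.take i).flatMap pf ++ p[i].1 :: p[i].2 ::
        (((p.drop (i + 1)).take (j - i - 1)).flatMap pf ++
          p[j].1 :: p[j].2 :: (p.drop (j + 1)).flatMap pf) := by
  rw [split1_pf p (show i < p.length by omega)]
  congr 3
  have hlen : j - i - 1 < (p.drop (i + 1)).length := by
    rw [List.length_drop]; omega
  rw [split1_pf (p.drop (i + 1)) hlen]
  have h1 : (p.drop (i + 1))[j - i - 1] = p[j] := by
    rw [List.getElem_drop]
    congr 1
    omega
  have h2 : (p.drop (i + 1)).drop (j - i - 1 + 1) = p.drop (j + 1) := by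
    rw [List.drop_drop]
    congr 1
    omega
  rw [h1, h2]
lemma exchEdge_swap {M : Matroid α} {B1 B2 : Set α} :
    ExchEdge M B2 B1 = ExchEdge M B1 B2 := by
  funext x y
  exact propext or_comm

lemma exchangeableSet_swap {M : Matroid α} {B1 B2 X : Set α} :
    ExchangeableSet M B2 B1 X ↔ ExchangeableSet M B1 B2 X := by
  unfold ExchangeableSet
  rw [union_comm]
  tauto

lemma edge_type1 {M : Matroid α} {B1 B2 : Set α} (hdisj : Disjoint B1 B2) {x y : α}
    (h : ExchEdge M B1 B2 x y) (hx : x ∈ B1) :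
    y ∈ B2 ∧ M.IsBase (insert y (B1 \ {x})) := by
  rcases h with ⟨_, h2, h3⟩ | ⟨h1, _, _⟩
  · exact ⟨h2, h3⟩
  · exact absurd h1 (disjoint_left.1 hdisj hx)

lemma edge_type2 {M : Matroid α} {B1 B2 : Set α} (hdisj : Disjoint B1 B2) {x y : α}
    (h : ExchEdge M B1 B2 x y) (hx : x ∈ B2) :
    y ∈ B1 ∧ M.IsBase (insert y (B2 \ {x})) := by
  rcases h with ⟨h1, _, _⟩ | ⟨_, h2, h3⟩
  · exact absurd hx (disjoint_left.1 hdisj h1)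
  · exact ⟨h2, h3⟩

lemma cycle_vertex_edge {R : α → α → Prop} {l : List α} {t : α}
    (hcyc : IsCycle R l) (ht : t ∈ l) : ∃ y, R t y := by
  obtain ⟨s, u, rfl⟩ := List.append_of_mem ht
  obtain ⟨hne, _, hch, hcl⟩ := hcyc
  cases u with
  | nil =>
    have h1 : (s ++ [t]).getLast hne = t := by
      rw [List.getLast_append_of_ne_nil _ (by simp : ([t] : List α) ≠ [])]
      rfl
    have h2 := hcl hne
    rw [h1] at h2
    exact ⟨(s ++ [t]).head hne, h2⟩
  | cons y u' => exact ⟨y, chain'_infix_pair s hch⟩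

lemma decomp {M : Matroid α} {B1 B2 : Set α} (hdisj : Disjoint B1 B2) :
    ∀ (n : ℕ) (r : List α), r.length ≤ n → r.Chain' (ExchEdge M B1 B2) →
    ∀ (hne : r ≠ []), r.head hne ∈ B1 → r.getLast hne ∈ B2 →
    ∃ p : List (α × α), p ≠ [] ∧ r = p.flatMap pf ∧ ∀ q ∈ p, q.1 ∈ B1 ∧ q.2 ∈ B2 := by
  intro n
  induction n with
  | zero =>
    intro r hlen _ hne _ _
    exact absurd (List.eq_nil_of_length_eq_zero (Nat.le_zero.1 hlen)) hne
  | succ n ih =>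
    intro r hlen hch hne hhead hlast
    match r, hne with
    | x :: rest, hne =>
      have hx : x ∈ B1 := by simpa using hhead
      match rest with
      | [] => exact absurd (by simpa using hlast) (disjoint_left.1 hdisj hx)
      | y :: rest2 =>
        have hxy : ExchEdge M B1 B2 x y := (List.isChain_cons_cons.1 hch).1
        have hy : y ∈ B2 := (edge_type1 hdisj hxy hx).1
        match rest2 with
        | [] =>
          refine ⟨[(x, y)], by simp, by simp [pf], ?_⟩
          rintro q hq
          simp only [List.mem_singleton] at hq
          subst hq
          exact ⟨hx, hy⟩
        | z :: rest3 =>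
          have hyz : ExchEdge M B1 B2 y z := (List.isChain_cons_cons.1 (List.isChain_cons_cons.1 hch).2).1
          have hz : z ∈ B1 := (edge_type2 hdisj hyz hy).1
          have hch3 : (z :: rest3).Chain' (ExchEdge M B1 B2) :=
            ((List.isChain_cons_cons.1 hch).2).tail
          have hlast3 : (z :: rest3).getLast (by simp) = (x :: y :: z :: rest3).getLast hne := by
            rw [List.getLast_cons (by simp : (y :: z :: rest3) ≠ []),
              List.getLast_cons (by simp : (z :: rest3) ≠ [])]
          obtain ⟨p', hp'ne, hp'eq, hp'mem⟩ := ih (z :: rest3)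
            (by simp at hlen ⊢; omega) hch3 (by simp) (by simpa using hz)
            (hlast3 ▸ hlast)
          refine ⟨(x, y) :: p', by simp, ?_, ?_⟩
          · rw [flatMap_pf_cons, ← hp'eq]
          · rintro q hq
            rcases List.mem_cons.1 hq with rfl | hq
            · exact ⟨hx, hy⟩
            · exact hp'mem q hq
lemma mem_of_getLast?_eq {l : List α} {a : α} (h : l.getLast? = some a) : a ∈ l := by
  have hne : l ≠ [] := by rintro rfl; simp at h
  rw [List.getLast?_eq_getLast hne] at h
  exact (Option.some_inj.1 h) ▸ List.getLast_mem hne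

set_option maxHeartbeats 1000000 in
lemma key_rot {M : Matroid α} {B1 B2 : Set α} (hB1 : M.IsBase B1) (hB2 : M.IsBase B2)
    (hdisj : Disjoint B1 B2) {t : α} (ht2 : t ∈ B2) (r : List α)
    (hcycr : IsCycle (ExchEdge M B1 B2) r) (hrne : r ≠ [])
    (hrlast : r.getLast hrne = t)
    (hminr : ∀ l', IsCycle (ExchEdge M B1 B2) l' → t ∈ l' →
      ¬ ({x | x ∈ l'} ⊂ {x | x ∈ r})) :
    ExchangeableSet M B1 B2 {x | x ∈ r} := by
  have hnd : r.Nodup := hcycr.2.1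
  have hch : r.Chain' (ExchEdge M B1 B2) := hcycr.2.2.1
  have hclose := hcycr.2.2.2 hrne
  rw [hrlast] at hclose
  have hhead1 : r.head hrne ∈ B1 := (edge_type2 hdisj hclose ht2).1
  obtain ⟨p, hpne, hrp, hpmem⟩ := decomp hdisj r.length r le_rfl hch hrne hhead1
    (by rw [hrlast]; exact ht2)
  subst hrp
  have hn : 0 < p.length := List.length_pos_iff.2 hpne
  have hq1 : ∀ i (hi : i < p.length), p[i].1 ∈ B1 :=
    fun i hi => (hpmem p[i] (List.getElem_mem hi)).1
  have hq2 : ∀ i (hi : i < p.length), p[i].2 ∈ B2 :=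
    fun i hi => (hpmem p[i] (List.getElem_mem hi)).2
  have hlp : (p.getLast hpne).2 = t := by
    rw [← getLast_flatMap_pf hpne hrne]; exact hrlast
  have hlpi : p[p.length - 1].2 = t := by
    rw [← hlp, List.getLast_eq_getElem]
  have hlast? : (p.flatMap pf).getLast? = some t := by
    rw [List.getLast?_eq_getLast hrne, hrlast]
  have hheadr : (p.flatMap pf).head hrne = p[0].1 := by
    rw [head_flatMap_pf hpne hrne, List.head_eq_getElem]
  have hndf : (p.map Prod.fst).Nodup := (mapfst_sublist_flatMap_pf p).nodup hnd
  have hnds : (p.map Prod.snd).Nodup := (mapsnd_sublist_flatMap_pf p).nodup hnd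
  -- cycle edges of type 1
  have hedge1 : ∀ i (hi : i < p.length), M.IsBase (insert p[i].2 (B1 \ {p[i].1})) := by
    intro i hi
    have hch2 := hch
    rw [split1_pf p hi] at hch2
    exact (edge_type1 hdisj (chain'_infix_pair _ hch2) (hq1 i hi)).2
  -- cycle edges of type 2
  have hedge2 : ∀ i (hi : i + 1 < p.length), M.IsBase (insert p[i+1].1 (B2 \ {p[i].2})) := by
    intro i hi
    have hsp := split2_pf p (Nat.lt_succ_self i) hi
    rw [show i + 1 - i - 1 = 0 from by omega, List.take_zero] at hsp
    simp only [List.flatMap_nil, List.nil_append] at hsp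
    have hch2 := hch
    rw [hsp, show (p.take i).flatMap pf ++ p[i].1 :: p[i].2 :: p[i+1].1 :: p[i+1].2 ::
        (p.drop (i+1+1)).flatMap pf
      = ((p.take i).flatMap pf ++ [p[i].1]) ++ p[i].2 :: p[i+1].1 ::
        (p[i+1].2 :: (p.drop (i+1+1)).flatMap pf) from by simp] at hch2
    exact (edge_type2 hdisj (chain'_infix_pair _ hch2) (hq2 i (by omega))).2
  -- the closing edge, type 2
  have hclose2 : M.IsBase (insert (p[0].1) (B2 \ {t})) := by
    have := (edge_type2 hdisj hclose ht2).2
    rwa [hheadr] at this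
  -- triangularity for B1
  have htri1 : ∀ i j (hi : i < p.length) (hj : j < p.length), i < j →
      ¬ M.IsBase (insert p[j].2 (B1 \ {p[i].1})) := by
    intro i j hi hj hij hbase
    have hchord : ExchEdge M B1 B2 p[i].1 p[j].2 := Or.inl ⟨hq1 i hi, hq2 j hj, hbase⟩
    have hsplit : p.flatMap pf = ((p.take i).flatMap pf ++ [p[i].1]) ++
        ((p[i].2 :: (((p.drop (i+1)).take (j - i - 1)).flatMap pf ++ [p[j].1])) ++
          (p[j].2 :: (p.drop (j+1)).flatMap pf)) := by
      rw [split2_pf p hij hj]; simp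
    have hAne : (p.take i).flatMap pf ++ [p[i].1] ≠ [] := by simp
    have hZne : p[j].2 :: (p.drop (j+1)).flatMap pf ≠ [] := by simp
    have hcyc2 := hcycr
    rw [hsplit] at hcyc2
    have hAlast : ((p.take i).flatMap pf ++ [p[i].1]).getLast hAne = p[i].1 := by
      rw [List.getLast_append_of_ne_nil _ (by simp : ([p[i].1] : List α) ≠ [])]; rfl
    obtain ⟨hc', hss⟩ := shortcut1 hAne (by simp) hZne hcyc2 (by rw [hAlast]; exact hchord)
    rw [← hsplit] at hss
    refine hminr _ hc' ?_ hss
    -- t ∈ A ++ Z since t is the last element of Z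
    have hZlast : (p[j].2 :: (p.drop (j+1)).flatMap pf).getLast? = some t := by
      have h2 := hlast?
      rw [hsplit, List.getLast?_append, List.getLast?_append] at h2
      rw [List.getLast?_eq_getLast hZne] at h2 ⊢
      simpa using h2
    exact List.mem_append_right _ (mem_of_getLast?_eq hZlast)
  -- triangularity for B2, part a : chords leaving t
  have htri2a : ∀ m (hm : m < p.length), 0 < m → ¬ M.IsBase (insert p[m].1 (B2 \ {t})) := by
    intro m hm hm0 hbase
    have hchord : ExchEdge M B1 B2 t p[m].1 := Or.inr ⟨ht2, hq1 m hm, hbase⟩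
    have hsplit : p.flatMap pf = (p.take m).flatMap pf ++
        (p[m].1 :: p[m].2 :: (p.drop (m+1)).flatMap pf) := split1_pf p hm
    have hMne : (p.take m).flatMap pf ≠ [] := by
      apply flatMap_pf_ne_nil
      apply List.length_pos_iff.1
      rw [List.length_take]; omega
    have hZne : p[m].1 :: p[m].2 :: (p.drop (m+1)).flatMap pf ≠ [] := by simp
    have hcyc2 := hcycr
    rw [hsplit] at hcyc2
    have hZlast : (p[m].1 :: p[m].2 :: (p.drop (m+1)).flatMap pf).getLast? = some t := by
      have h2 := hlast?
      rw [hsplit, List.getLast?_append] at h2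
      rw [List.getLast?_eq_getLast hZne] at h2 ⊢
      simpa using h2
    have hZlast' : (p[m].1 :: p[m].2 :: (p.drop (m+1)).flatMap pf).getLast hZne = t := by
      rw [List.getLast?_eq_getLast hZne] at hZlast
      simpa using hZlast
    obtain ⟨hc', hss⟩ := shortcut2 hMne hZne hcyc2 (by rw [hZlast']; exact hchord)
    rw [← hsplit] at hss
    exact hminr _ hc' (hZlast' ▸ List.getLast_mem hZne) hss
  -- triangularity for B2, part b : chords between non-consecutive pairs
  have htri2b : ∀ i j (hi : i < p.length) (hj : j < p.length), i + 2 ≤ j →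
      ¬ M.IsBase (insert p[j].1 (B2 \ {p[i].2})) := by
    intro i j hi hj hij hbase
    have hchord : ExchEdge M B1 B2 p[i].2 p[j].1 := Or.inr ⟨hq2 i hi, hq1 j hj, hbase⟩
    have hsplit : p.flatMap pf = ((p.take i).flatMap pf ++ [p[i].1, p[i].2]) ++
        ((((p.drop (i+1)).take (j - i - 1)).flatMap pf) ++
          (p[j].1 :: p[j].2 :: (p.drop (j+1)).flatMap pf)) := by
      rw [split2_pf p (show i < j by omega) hj]; simp
    have hAne : (p.take i).flatMap pf ++ [p[i].1, p[i].2] ≠ [] := by simp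
    have hMne : ((p.drop (i+1)).take (j - i - 1)).flatMap pf ≠ [] := by
      apply flatMap_pf_ne_nil
      apply List.length_pos_iff.1
      rw [List.length_take, List.length_drop]; omega
    have hZne : p[j].1 :: p[j].2 :: (p.drop (j+1)).flatMap pf ≠ [] := by simp
    have hcyc2 := hcycr
    rw [hsplit] at hcyc2
    have hAlast : ((p.take i).flatMap pf ++ [p[i].1, p[i].2]).getLast hAne = p[i].2 := by
      rw [List.getLast_append_of_ne_nil _ (by simp : ([p[i].1, p[i].2] : List α) ≠ [])]; rfl
    obtain ⟨hc', hss⟩ := shortcut1 hAne hMne hZne hcyc2 (by rw [hAlast]; exact hchord)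
    rw [← hsplit] at hss
    refine hminr _ hc' ?_ hss
    have hZlast : (p[j].1 :: p[j].2 :: (p.drop (j+1)).flatMap pf).getLast? = some t := by
      have h2 := hlast?
      rw [hsplit, List.getLast?_append, List.getLast?_append] at h2
      rw [List.getLast?_eq_getLast hZne] at h2 ⊢
      simpa using h2
    exact List.mem_append_right _ (mem_of_getLast?_eq hZlast)
  -- apply the triangular exchange lemma for B1
  have hbase1 : M.IsBase ((B1 \ {x | x ∈ p.map Prod.fst}) ∪ {x | x ∈ p.map Prod.snd}) := by
    apply triangular_exchange M p B1 hB1 hndf hnds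
    · intro q hq; exact (hpmem q hq).1
    · intro q hq
      exact ⟨hB2.subset_ground (hpmem q hq).2, disjoint_right.1 hdisj (hpmem q hq).2⟩
    · intro q hq
      obtain ⟨i, hi, rfl⟩ := List.mem_iff_getElem.1 hq
      exact hedge1 i hi
    · rw [List.pairwise_iff_getElem]
      intro i j hi hj hij
      exact htri1 i j hi hj hij
  -- the shifted pair list for B2
  set p2 : List (α × α) :=
    (t, p[0].1) :: ((p.zip p.tail).map (fun z => (z.1.2, z.2.1))) with hp2def
  have hp2len : p2.length = p.length := by
    simp only [hp2def, List.length_cons, List.length_map, List.length_zip, List.length_tail]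
    omega
  have hp2getS : ∀ k (hk : k + 1 < p2.length),
      p2[k+1] = ((p[k]'(by omega)).2, (p[k+1]'(by omega)).1) := by
    intro k hk
    have hk2 : k < ((p.zip p.tail).map (fun z => (z.1.2, z.2.1))).length := by
      simpa [hp2def] using hk
    have hk3 : k < (p.zip p.tail).length := by simpa using hk2
    simp only [hp2def, List.getElem_cons_succ, List.getElem_map, List.getElem_zip]
    rw [List.getElem_tail]
  have hp2snd : ∀ k (hk : k < p2.length), p2[k].2 = (p[k]'(by omega)).1 := by
    intro k hk
    cases k with
    | zero => simp [hp2def]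
    | succ k => exact congrArg Prod.snd (hp2getS k hk)
  have hp2fst0 : p2[0].1 = t := by simp [hp2def]
  have hp2fstS : ∀ k (hk : k + 1 < p2.length), p2[k+1].1 = (p[k]'(by omega)).2 := by
    intro k hk
    exact congrArg Prod.fst (hp2getS k hk)
  -- p2.map snd = p.map fst
  have hp2sndeq : p2.map Prod.snd = p.map Prod.fst := by
    apply List.ext_getElem
    · simp [hp2len]
    · intro k h1 h2
      rw [List.getElem_map, List.getElem_map, hp2snd k (by simpa using h1)]
  -- p2.map fst = t :: (p.map snd).dropLast
  have hp2fsteq : p2.map Prod.fst = t :: (p.map Prod.snd).dropLast := by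
    apply List.ext_getElem
    · simp only [List.length_map, hp2len, List.length_cons, List.length_dropLast]
      omega
    · intro k h1 h2
      cases k with
      | zero => simpa using hp2fst0
      | succ k =>
        rw [List.getElem_map, hp2fstS k (by simpa using h1), List.getElem_cons_succ,
          List.getElem_dropLast, List.getElem_map]
  have hmapsnd_split : (p.map Prod.snd).dropLast ++ [t] = p.map Prod.snd := by
    have h1 : (p.map Prod.snd) ≠ [] := by simp [hpne]
    have h2 := List.dropLast_append_getLast h1
    rw [List.getLast_eq_getElem] at h2
    rw [← h2]
    congr 2
    rw [List.getElem_map]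
    simp only [List.length_map]
    exact hlpi.symm
  have hnds2 : (t :: (p.map Prod.snd).dropLast).Nodup := by
    have h2 := hnds
    rw [← hmapsnd_split, List.nodup_append] at h2
    rw [List.nodup_cons]
    exact ⟨fun hmem => h2.2.2 _ hmem _ (by simp) rfl, h2.1⟩
  have hfstset : {x | x ∈ p2.map Prod.fst} = {x | x ∈ p.map Prod.snd} := by
    rw [hp2fsteq]
    conv_rhs => rw [← hmapsnd_split]
    ext z
    simp only [mem_setOf_eq, List.mem_cons, List.mem_append, List.mem_singleton,
      List.mem_nil_iff, or_false]
    tauto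
  -- apply the triangular exchange lemma for B2
  have hbase2 : M.IsBase ((B2 \ {x | x ∈ p.map Prod.snd}) ∪ {x | x ∈ p.map Prod.fst}) := by
    have h := triangular_exchange M p2 B2 hB2 (by rw [hp2fsteq]; exact hnds2)
      (by rw [hp2sndeq]; exact hndf) ?_ ?_ ?_ ?_
    · rwa [hfstset, hp2sndeq] at h
    · intro q hq
      obtain ⟨k, hk, rfl⟩ := List.mem_iff_getElem.1 hq
      cases k with
      | zero => rw [hp2fst0]; exact ht2
      | succ k => rw [hp2fstS k hk]; exact hq2 k (by omega)
    · intro q hq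
      obtain ⟨k, hk, rfl⟩ := List.mem_iff_getElem.1 hq
      have hkp : k < p.length := by omega
      rw [hp2snd k hk]
      exact ⟨hB1.subset_ground (hq1 k hkp), disjoint_left.1 hdisj (hq1 k hkp)⟩
    · intro q hq
      obtain ⟨k, hk, rfl⟩ := List.mem_iff_getElem.1 hq
      cases k with
      | zero =>
        rw [hp2snd 0 hk, hp2fst0]
        exact hclose2
      | succ k =>
        rw [hp2snd (k+1) hk, hp2fstS k hk]
        exact hedge2 k (by omega)
    · rw [List.pairwise_iff_getElem]
      intro i j hi hj hij
      rw [hp2snd j hj]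
      cases i with
      | zero =>
        rw [hp2fst0]
        exact htri2a j (by omega) (by omega)
      | succ i =>
        rw [hp2fstS i hi]
        exact htri2b i j (by omega) (by omega) (by omega)
  -- assemble
  have hFsub : {x | x ∈ p.map Prod.fst} ⊆ B1 := by
    intro z hz
    obtain ⟨q, hq, rfl⟩ := List.mem_map.1 hz
    exact (hpmem q hq).1
  have hSsub : {x | x ∈ p.map Prod.snd} ⊆ B2 := by
    intro z hz
    obtain ⟨q, hq, rfl⟩ := List.mem_map.1 hz
    exact (hpmem q hq).2
  have hVeq : {x | x ∈ p.flatMap pf} =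
      {x | x ∈ p.map Prod.fst} ∪ {x | x ∈ p.map Prod.snd} := by
    ext z
    simp only [mem_setOf_eq, mem_union, mem_flatMap_pf, List.mem_map]
    constructor
    · rintro ⟨q, hq, rfl | rfl⟩
      exacts [Or.inl ⟨q, hq, rfl⟩, Or.inr ⟨q, hq, rfl⟩]
    · rintro (⟨q, hq, rfl⟩ | ⟨q, hq, rfl⟩)
      exacts [⟨q, hq, Or.inl rfl⟩, ⟨q, hq, Or.inr rfl⟩]
  refine ⟨?_, ?_, ?_⟩
  · rw [hVeq]
    intro z hz
    rcases hz with hz | hz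
    · exact Or.inl (hFsub hz)
    · exact Or.inr (hSsub hz)
  · have heq : symmDiff B1 {x | x ∈ p.flatMap pf} =
        (B1 \ {x | x ∈ p.map Prod.fst}) ∪ {x | x ∈ p.map Prod.snd} := by
      rw [symmDiff_def, hVeq]
      ext z
      have h1 : z ∈ {x | x ∈ p.map Prod.fst} → z ∈ B1 := fun h => hFsub h
      have h2 : z ∈ {x | x ∈ p.map Prod.snd} → z ∈ B2 := fun h => hSsub h
      have h3 : z ∈ B1 → z ∈ B2 → False := fun a b => disjoint_left.1 hdisj a b
      simp only [sup_eq_union, mem_union, mem_diff]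
      tauto
    rw [heq]
    exact hbase1
  · have heq : symmDiff B2 {x | x ∈ p.flatMap pf} =
        (B2 \ {x | x ∈ p.map Prod.snd}) ∪ {x | x ∈ p.map Prod.fst} := by
      rw [symmDiff_def, hVeq]
      ext z
      have h1 : z ∈ {x | x ∈ p.map Prod.fst} → z ∈ B1 := fun h => hFsub h
      have h2 : z ∈ {x | x ∈ p.map Prod.snd} → z ∈ B2 := fun h => hSsub h
      have h3 : z ∈ B1 → z ∈ B2 → False := fun a b => disjoint_left.1 hdisj a b
      simp only [sup_eq_union, mem_union, mem_diff]
      tauto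
    rw [heq]
    exact hbase2
lemma key {M : Matroid α} {B1 B2 : Set α} (hB1 : M.IsBase B1) (hB2 : M.IsBase B2)
    (hdisj : Disjoint B1 B2) {t : α} (ht2 : t ∈ B2) (l : List α)
    (hcyc : IsCycle (ExchEdge M B1 B2) l) (htl : t ∈ l)
    (hmin : ∀ l', IsCycle (ExchEdge M B1 B2) l' → t ∈ l' →
      ¬ ({x | x ∈ l'} ⊂ {x | x ∈ l})) :
    ExchangeableSet M B1 B2 {x | x ∈ l} := by
  obtain ⟨s, u, rfl⟩ := List.append_of_mem htl
  have hassoc : s ++ t :: u = (s ++ [t]) ++ u := by simp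
  have hcycr : IsCycle (ExchEdge M B1 B2) (u ++ (s ++ [t])) :=
    isCycle_rotate (by rw [← hassoc]; exact hcyc)
  have hset : {x | x ∈ u ++ (s ++ [t])} = {x | x ∈ s ++ t :: u} := by
    ext z
    simp only [mem_setOf_eq, List.mem_append, List.mem_cons, List.mem_singleton]
    tauto
  have hrne : u ++ (s ++ [t]) ≠ [] := by simp
  have hrlast : (u ++ (s ++ [t])).getLast hrne = t := by
    rw [List.getLast_append_of_ne_nil _ (by simp : s ++ [t] ≠ []),
      List.getLast_append_of_ne_nil _ (by simp : ([t] : List α) ≠ [])]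
    rfl
  have hres := key_rot hB1 hB2 hdisj ht2 (u ++ (s ++ [t])) hcycr hrne hrlast ?_
  · rwa [hset] at hres
  · intro l' h1 h2 h3
    exact hmin l' h1 h2 (hset ▸ h3)

lemma key2 {M : Matroid α} {B1 B2 : Set α} (hB1 : M.IsBase B1) (hB2 : M.IsBase B2)
    (hdisj : Disjoint B1 B2) {t : α} (l : List α)
    (hcyc : IsCycle (ExchEdge M B1 B2) l) (htl : t ∈ l)
    (hmin : ∀ l', IsCycle (ExchEdge M B1 B2) l' → t ∈ l' →
      ¬ ({x | x ∈ l'} ⊂ {x | x ∈ l})) :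
    ExchangeableSet M B1 B2 {x | x ∈ l} := by
  obtain ⟨y, hty⟩ := cycle_vertex_edge hcyc htl
  have htu : t ∈ B1 ∪ B2 := by
    rcases hty with ⟨h, _, _⟩ | ⟨h, _, _⟩
    · exact Or.inl h
    · exact Or.inr h
  rcases htu with ht1 | ht2
  · -- swap the roles of B1 and B2
    rw [← exchangeableSet_swap]
    refine key hB2 hB1 hdisj.symm ht1 l ?_ htl ?_
    · rwa [exchEdge_swap]
    · intro l' h1 h2 h3
      rw [exchEdge_swap] at h1
      exact hmin l' h1 h2 h3
  · exact key hB1 hB2 hdisj ht2 l hcyc htl hmin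

/-- If `C` is a cycle in the exchange graph `D(B1,B2)` and `t ∈ V(C)`, then there is an
exchangeable set `U ⊆ V(C)` with `t ∈ U`; moreover if no cycle `C'` satisfies
`t ∈ V(C') ⊊ V(C)`, then `V(C)` itself is exchangeable. -/
theorem cycle_implies_exchangeable (M : Matroid α) (B1 B2 : Set α)
    (hB1 : M.IsBase B1) (hB2 : M.IsBase B2) (hdisj : Disjoint B1 B2)
    (l : List α) (hcyc : IsCycle (ExchEdge M B1 B2) l) (t : α) (ht : t ∈ l) :
    (∃ U : Set α, U ⊆ {x | x ∈ l} ∧ t ∈ U ∧ ExchangeableSet M B1 B2 U) ∧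
    ((¬ ∃ l' : List α, IsCycle (ExchEdge M B1 B2) l' ∧ t ∈ l' ∧
        {x | x ∈ l'} ⊂ {x | x ∈ l}) →
      ExchangeableSet M B1 B2 {x | x ∈ l}) := by
  classical
  constructor
  · -- strong induction on the length of the cycle
    have main : ∀ (n : ℕ) (l : List α), l.length ≤ n → IsCycle (ExchEdge M B1 B2) l →
        t ∈ l → ∃ U : Set α, U ⊆ {x | x ∈ l} ∧ t ∈ U ∧ ExchangeableSet M B1 B2 U := by
      intro n
      induction n with
      | zero =>
        intro l hlen _ htl
        rw [List.eq_nil_of_length_eq_zero (Nat.le_zero.1 hlen)] at htl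
        simp at htl
      | succ n ih =>
        intro l hlen hc htl
        by_cases hex : ∃ l', IsCycle (ExchEdge M B1 B2) l' ∧ t ∈ l' ∧
            {x | x ∈ l'} ⊂ {x | x ∈ l}
        · obtain ⟨l', hc', ht', hss⟩ := hex
          have hlen' : l'.length ≤ n := by
            have h1 : l'.toFinset.card < l.toFinset.card := by
              apply Finset.card_lt_card
              rw [← Finset.coe_ssubset, List.coe_toFinset, List.coe_toFinset]
              exact hss
            rw [List.toFinset_card_of_nodup hc'.2.1, List.toFinset_card_of_nodup hc.2.1] at h1
            omega
          obtain ⟨U, hU1, hU2, hU3⟩ := ih l' hlen' hc' ht'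
          exact ⟨U, hU1.trans hss.subset, hU2, hU3⟩
        · refine ⟨{x | x ∈ l}, subset_rfl, htl, ?_⟩
          exact key2 hB1 hB2 hdisj l hc htl (fun l' h1 h2 h3 => hex ⟨l', h1, h2, h3⟩)
    exact main l.length l le_rfl hcyc ht
  · intro hno
    exact key2 hB1 hB2 hdisj l hcyc ht (fun l' h1 h2 h3 => hno ⟨l', h1, h2, h3⟩)
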